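/- arXiv:2309.04193 — 6 statements merged into one kernel-verified Lean document; each statement's English description precedes it below -/
import Mathlib

section
/- Let v₁, v₂ ∈ ℝⁿ and D = conv{v₁, v₂}. Then the union over all x ∈ D of the hyperplanes H_x = {y : y·x = 0} equals (H_{v₁}⁻ ∩ H_{v₂}⁺) ∪ (H_{v₁}⁺ ∩ H_{v₂}⁻). -/
open Matrix

theorem stmt_1 (n : ℕ) (v₁ v₂ : Fin n → ℝ) :
    (⋃ x ∈ segment ℝ v₁ v₂, {y : Fin n → ℝ | y ⬝ᵥ x = 0}) =
      ({y : Fin n → ℝ | y ⬝ᵥ v₁ ≤ 0} ∩ {y : Fin n → ℝ | 0 ≤ y ⬝ᵥ v₂}) ∪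
      ({y : Fin n → ℝ | 0 ≤ y ⬝ᵥ v₁} ∩ {y : Fin n → ℝ | y ⬝ᵥ v₂ ≤ 0}) := by
  ext y
  simp only [Set.mem_iUnion, Set.mem_setOf_eq, Set.mem_union, Set.mem_inter_iff, exists_prop]
  constructor
  · rintro ⟨x, ⟨a, b, ha, hb, hab, rfl⟩, hx⟩
    rw [dotProduct_add, dotProduct_smul, dotProduct_smul, smul_eq_mul, smul_eq_mul] at hx
    set s := y ⬝ᵥ v₁ with hsdef
    set t := y ⬝ᵥ v₂ with htdef
    rcases le_or_gt s 0 with hs | hs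
    · rcases le_or_gt 0 t with ht | ht
      · exact Or.inl ⟨hs, ht⟩
      · refine Or.inr ⟨?_, ht.le⟩
        -- show 0 ≤ s; in fact s = 0 would contradict unless a = 0, then t = 0 contra
        by_contra hcon
        push_neg at hcon
        have h1 : a * s ≤ 0 := mul_nonpos_of_nonneg_of_nonpos ha hs
        have h2 : b * t ≤ 0 := mul_nonpos_of_nonneg_of_nonpos hb ht.le
        have h3 : a * s = 0 := by linarith
        have h4 : b * t = 0 := by linarith
        have ha0 : a = 0 := by
          rcases mul_eq_zero.1 h3 with h | h
          · exact h
          · exact absurd h hcon.ne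
        have hb1 : b = 1 := by linarith
        rw [hb1, one_mul] at h4
        exact ht.ne h4
    · rcases le_or_gt t 0 with ht | ht
      · exact Or.inr ⟨hs.le, ht⟩
      · exfalso
        have h1 : 0 ≤ a * s := mul_nonneg ha hs.le
        have h2 : 0 ≤ b * t := mul_nonneg hb ht.le
        have h3 : a * s = 0 := by linarith
        have h4 : b * t = 0 := by linarith
        have ha0 : a = 0 := by
          rcases mul_eq_zero.1 h3 with h | h
          · exact h
          · exact absurd h hs.ne'
        have hb0 : b = 0 := by
          rcases mul_eq_zero.1 h4 with h | h
          · exact h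
          · exact absurd h ht.ne'
        rw [ha0, hb0] at hab
        norm_num at hab
  · have key : ∀ (w₁ w₂ : Fin n → ℝ), y ⬝ᵥ w₁ ≤ 0 → 0 ≤ y ⬝ᵥ w₂ →
        ∃ x ∈ segment ℝ w₁ w₂, y ⬝ᵥ x = 0 := by
      intro w₁ w₂ hs ht
      set s := y ⬝ᵥ w₁
      set t := y ⬝ᵥ w₂
      rcases eq_or_lt_of_le (sub_nonneg.2 (hs.trans ht) : (0:ℝ) ≤ t - s) with h0 | h0
      · have hs0 : s = 0 := by linarith [sub_eq_zero.1 h0.symm ▸ hs]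
        exact ⟨w₁, left_mem_segment ℝ w₁ w₂, hs0⟩
      · set θ : ℝ := -s / (t - s) with hθ
        have hθ0 : 0 ≤ θ := div_nonneg (neg_nonneg.2 hs) h0.le
        have hθ1 : θ ≤ 1 := by
          rw [hθ, div_le_one h0]; linarith
        refine ⟨(1 - θ) • w₁ + θ • w₂, ⟨1 - θ, θ, by linarith, hθ0, by ring, rfl⟩, ?_⟩
        rw [dotProduct_add, dotProduct_smul, dotProduct_smul, smul_eq_mul, smul_eq_mul]
        have : θ * (t - s) = -s := by
          rw [hθ, div_mul_cancel₀]; exact h0.ne'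
        nlinarith [this]
    rintro (⟨hs, ht⟩ | ⟨hs, ht⟩)
    · obtain ⟨x, hx, hx0⟩ := key v₁ v₂ hs ht
      exact ⟨x, hx, hx0⟩
    · obtain ⟨x, hx, hx0⟩ := key v₂ v₁ ht hs
      exact ⟨x, (segment_symm ℝ v₂ v₁) ▸ hx, hx0⟩
end

section
/- Let μ, μ' ∈ Δ(Θ) be beliefs over a finite state space, and A(·) the argmax correspondence of a receiver utility u_R. If A(μ) ∩ A(μ') ≠ ∅, then for every μ̃ in the segment conv{μ, μ'} with μ̃ ∉ {μ, μ'}, one has A(μ̃) = A(μ) ∩ A(μ'). -/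
theorem stmt_7 (A Θ : Type*) [Fintype A] [Fintype Θ]
    (uR : A → Θ → ℝ) (μ μ' : Θ → ℝ)
    (hμ : μ ∈ stdSimplex ℝ Θ) (hμ' : μ' ∈ stdSimplex ℝ Θ)
    (hcap : ({a : A | ∀ b : A, ∑ θ, uR b θ * μ θ ≤ ∑ θ, uR a θ * μ θ} ∩
             {a : A | ∀ b : A, ∑ θ, uR b θ * μ' θ ≤ ∑ θ, uR a θ * μ' θ}).Nonempty) :
    ∀ ν ∈ segment ℝ μ μ', ν ≠ μ → ν ≠ μ' →
      {a : A | ∀ b : A, ∑ θ, uR b θ * ν θ ≤ ∑ θ, uR a θ * ν θ} =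
      {a : A | ∀ b : A, ∑ θ, uR b θ * μ θ ≤ ∑ θ, uR a θ * μ θ} ∩
      {a : A | ∀ b : A, ∑ θ, uR b θ * μ' θ ≤ ∑ θ, uR a θ * μ' θ} := by
  rintro ν ⟨s, t, hs, ht, hst, rfl⟩ hν hν'
  obtain ⟨a0, ha0μ, ha0μ'⟩ := hcap
  have hs0 : s ≠ 0 := by
    rintro rfl
    apply hν'
    have : t = 1 := by linarith
    subst this
    funext θ; simp
  have ht0 : t ≠ 0 := by
    rintro rfl
    apply hν
    have : s = 1 := by linarith
    subst this
    funext θ; simp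
  have hspos : 0 < s := hs.lt_of_ne (Ne.symm hs0)
  have htpos : 0 < t := ht.lt_of_ne (Ne.symm ht0)
  have key : ∀ b : A, ∑ θ, uR b θ * (s • μ + t • μ') θ
      = s * ∑ θ, uR b θ * μ θ + t * ∑ θ, uR b θ * μ' θ := by
    intro b
    rw [Finset.mul_sum, Finset.mul_sum, ← Finset.sum_add_distrib]
    refine Finset.sum_congr rfl fun θ _ => ?_
    simp [smul_eq_mul]; ring
  ext a
  simp only [Set.mem_setOf_eq, Set.mem_inter_iff, key]
  constructor
  · intro ha
    have h1 : ∑ θ, uR a θ * μ θ ≤ ∑ θ, uR a0 θ * μ θ := ha0μ a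
    have h2 : ∑ θ, uR a θ * μ' θ ≤ ∑ θ, uR a0 θ * μ' θ := ha0μ' a
    have h3 := ha a0
    have e1 : ∑ θ, uR a θ * μ θ = ∑ θ, uR a0 θ * μ θ := by nlinarith
    have e2 : ∑ θ, uR a θ * μ' θ = ∑ θ, uR a0 θ * μ' θ := by nlinarith
    exact ⟨fun b => e1 ▸ ha0μ b, fun b => e2 ▸ ha0μ' b⟩
  · rintro ⟨h1, h2⟩ b
    have := h1 b; have := h2 b
    nlinarith
end

section
/- Let A(μ), A(μ') ⊆ A with A finite, and let D = {r − r' : r, r' ∈ Δ(A), supp(r) ⊆ A(μ), supp(r') ⊆ A(μ')} ⊆ ℝⁿ (n = |A|). For x ∈ D, a pair (r, r') ∈ Δ(A)² with supp(r) ⊆ A(μ), supp(r') ⊆ A(μ') satisfies r − r' = x if and only if (r, r') = (x⁺ + d, x⁻ + d) for some d ∈ ℝ₊ⁿ with 𝟙·d = 1 − 𝟙·x⁺ and d_i = 0 whenever a_i ∉ A(μ) ∩ A(μ'). -/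
theorem stmt_9 (α : Type*) [Fintype α] [DecidableEq α] (S T : Finset α)
    (x : α → ℝ)
    (hx : ∃ r r' : α → ℝ,
        (∀ a, 0 ≤ r a) ∧ (∑ a, r a) = 1 ∧ (∀ a, r a ≠ 0 → a ∈ S) ∧
        (∀ a, 0 ≤ r' a) ∧ (∑ a, r' a) = 1 ∧ (∀ a, r' a ≠ 0 → a ∈ T) ∧
        x = r - r')
    (r r' : α → ℝ)
    (hr : (∀ a, 0 ≤ r a) ∧ (∑ a, r a) = 1 ∧ (∀ a, r a ≠ 0 → a ∈ S))
    (hr' : (∀ a, 0 ≤ r' a) ∧ (∑ a, r' a) = 1 ∧ (∀ a, r' a ≠ 0 → a ∈ T)) :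
    r - r' = x ↔
      ∃ d : α → ℝ, (∀ a, 0 ≤ d a) ∧
        (∑ a, d a) = 1 - (∑ a, max (x a) 0) ∧
        (∀ a, a ∉ S ∩ T → d a = 0) ∧
        r = (fun a => max (x a) 0) + d ∧ r' = (fun a => max (-x a) 0) + d := by
  obtain ⟨hr0, hr1, hrS⟩ := hr
  obtain ⟨hr'0, hr'1, hr'T⟩ := hr'
  constructor
  · intro h
    have hxa : ∀ a, x a = r a - r' a := by
      intro a; rw [← h]; simp
    refine ⟨fun a => r a - max (x a) 0, ?_, ?_, ?_, ?_, ?_⟩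
    · intro a
      show 0 ≤ r a - max (x a) 0
      rcases max_cases (x a) 0 with ⟨he, _⟩ | ⟨he, _⟩ <;> rw [he] <;>
        [skip; skip] <;> (have := hr0 a; have := hr'0 a; have := hxa a; linarith)
    · rw [Finset.sum_sub_distrib, hr1]
    · intro a ha
      rw [Finset.mem_inter] at ha
      push_neg at ha
      show r a - max (x a) 0 = 0
      by_cases hS : a ∈ S
      · have hT := ha hS
        have : r' a = 0 := by
          by_contra hc; exact hT (hr'T a hc)
        have hxe := hxa a
        rcases max_cases (x a) 0 with ⟨he, _⟩ | ⟨he, hle⟩ <;> rw [he] <;> linarith [hr0 a]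
      · have : r a = 0 := by
          by_contra hc; exact hS (hrS a hc)
        rcases max_cases (x a) 0 with ⟨he, _⟩ | ⟨he, hle⟩ <;> rw [he] <;>
          [linarith [hxa a, hr'0 a]; linarith]
    · funext a; simp
    · funext a
      have := hxa a
      simp only [Pi.add_apply]
      rcases le_total (x a) 0 with hle | hle
      · rw [max_eq_left (by linarith), max_eq_right hle]; linarith
      · rw [max_eq_right (by linarith), max_eq_left hle]; linarith
  · rintro ⟨d, _, _, _, hre, hr'e⟩
    funext a
    rw [hre, hr'e]
    simp only [Pi.sub_apply, Pi.add_apply]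
    rcases le_total (x a) 0 with hle | hle
    · rw [max_eq_right hle, max_eq_left (by linarith)]; ring
    · rw [max_eq_left hle, max_eq_right (by linarith)]; ring
end

section
/- With D and the sets A(μ), A(μ') as in the decomposition lemma: if x₀ = r₀ − r₀' ∈ D with (r₀, r₀') a valid pair (supports contained in A(μ) and A(μ') respectively), then for any neighborhood R of (r₀, r₀') there is a neighborhood X of x₀ such that every x ∈ X ∩ D has a representation x = r − r' with (r, r') ∈ R, supp(r) ⊆ A(μ), supp(r') ⊆ A(μ'). (Local continuity of a selection of the inverse of the difference map.) -/
theorem stmt_10 (α : Type*) [Fintype α] [DecidableEq α] (S T : Finset α)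
    (r₀ r₀' : α → ℝ)
    (hr₀ : (∀ a, 0 ≤ r₀ a) ∧ (∑ a, r₀ a) = 1 ∧ (∀ a, r₀ a ≠ 0 → a ∈ S))
    (hr₀' : (∀ a, 0 ≤ r₀' a) ∧ (∑ a, r₀' a) = 1 ∧ (∀ a, r₀' a ≠ 0 → a ∈ T)) :
    ∀ R ∈ nhds (r₀, r₀'), ∃ X ∈ nhds (r₀ - r₀'),
      ∀ x ∈ X ∩ {x : α → ℝ | ∃ r r' : α → ℝ,
          (∀ a, 0 ≤ r a) ∧ (∑ a, r a) = 1 ∧ (∀ a, r a ≠ 0 → a ∈ S) ∧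
          (∀ a, 0 ≤ r' a) ∧ (∑ a, r' a) = 1 ∧ (∀ a, r' a ≠ 0 → a ∈ T) ∧
          x = r - r'},
        ∃ r r' : α → ℝ, (r, r') ∈ R ∧
          (∀ a, 0 ≤ r a) ∧ (∑ a, r a) = 1 ∧ (∀ a, r a ≠ 0 → a ∈ S) ∧
          (∀ a, 0 ≤ r' a) ∧ (∑ a, r' a) = 1 ∧ (∀ a, r' a ≠ 0 → a ∈ T) ∧
          x = r - r' := by
  obtain ⟨h0pos, h0sum, h0supp⟩ := hr₀
  obtain ⟨h0'pos, h0'sum, h0'supp⟩ := hr₀'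
  intro R hR
  rw [Metric.mem_nhds_iff] at hR
  obtain ⟨ε, hε, hball⟩ := hR
  set N : ℝ := (Fintype.card α : ℝ) with hN
  have hNnn : (0:ℝ) ≤ N := by positivity
  set δ : ℝ := ε / (2 * (N + 2)) with hδ
  have hδpos : 0 < δ := by positivity
  refine ⟨Metric.ball (r₀ - r₀') δ, Metric.ball_mem_nhds _ hδpos, ?_⟩
  rintro x ⟨hxB, r1, r2, h1p, h1s, h1S, h2p, h2s, h2T, hx⟩
  have hclose : ∀ a, |x a - (r₀ a - r₀' a)| < δ := by
    intro a
    have h := (dist_pi_lt_iff hδpos).mp (Metric.mem_ball.mp hxB) a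
    simp only [Pi.sub_apply, Real.dist_eq] at h
    exact h
  have hxa : ∀ a, x a = r1 a - r2 a := fun a => by rw [hx]; simp
  have hmaxneg : ∀ v : ℝ, max (-v) 0 = max v 0 - v := by
    intro v
    rcases le_total v 0 with h | h
    · rw [max_eq_left (neg_nonneg.mpr h), max_eq_right h]; ring
    · rw [max_eq_right (neg_nonpos.mpr h), max_eq_left h]; ring
  -- common-mass decomposition of (r₀, r₀')
  set m₀ : α → ℝ := fun a => r₀ a - max (r₀ a - r₀' a) 0 with hm₀
  have hm₀nn : ∀ a, 0 ≤ m₀ a := fun a => by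
    simp only [hm₀, sub_nonneg]
    exact max_le (by linarith [h0'pos a]) (h0pos a)
  have hm₀le' : ∀ a, m₀ a ≤ r₀' a := fun a => by
    simp only [hm₀]
    have : r₀ a - r₀' a ≤ max (r₀ a - r₀' a) 0 := le_max_left _ _
    linarith
  set γ0 : ℝ := 1 - ∑ a, max (r₀ a - r₀' a) 0 with hγ0
  set γx : ℝ := 1 - ∑ a, max (x a) 0 with hγx
  have hm₀sum : ∑ a, m₀ a = γ0 := by
    simp only [hm₀, Finset.sum_sub_distrib, h0sum, hγ0]
  have hγ0nn : 0 ≤ γ0 := hm₀sum ▸ Finset.sum_nonneg fun a _ => hm₀nn a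
  -- common mass of given representation of x
  set mt : α → ℝ := fun a => r1 a - max (x a) 0 with hmt
  have hmtnn : ∀ a, 0 ≤ mt a := fun a => by
    simp only [hmt, sub_nonneg]
    exact max_le (by rw [hxa a]; linarith [h2p a]) (h1p a)
  have hmtle' : ∀ a, mt a ≤ r2 a := fun a => by
    have : x a ≤ max (x a) 0 := le_max_left _ _
    have h2 := hxa a
    simp only [hmt]; linarith
  have hmtsum : ∑ a, mt a = γx := by
    simp only [hmt, Finset.sum_sub_distrib, h1s, hγx]
  have hγxnn : 0 ≤ γx := hmtsum ▸ Finset.sum_nonneg fun a _ => hmtnn a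
  have hγdiff : |γx - γ0| ≤ N * δ := by
    have heq : γx - γ0 = ∑ a, (max (r₀ a - r₀' a) 0 - max (x a) 0) := by
      rw [Finset.sum_sub_distrib, hγx, hγ0]; ring
    rw [heq]
    calc |∑ a, (max (r₀ a - r₀' a) 0 - max (x a) 0)|
        ≤ ∑ a, |max (r₀ a - r₀' a) 0 - max (x a) 0| :=
          Finset.abs_sum_le_sum_abs _ _
      _ ≤ ∑ _a : α, δ := by
          refine Finset.sum_le_sum fun a _ => ?_
          refine le_trans (abs_max_sub_max_le_abs _ _ _) ?_
          rw [abs_sub_comm]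
          exact (hclose a).le
      _ = N * δ := by
          rw [Finset.sum_const, nsmul_eq_mul, hN]
          simp [Finset.card_univ]
  -- construct the common mass m for x, close to m₀
  obtain ⟨m, hmnn, hmsum, hmS, hmT, hmclose⟩ :
      ∃ m : α → ℝ, (∀ a, 0 ≤ m a) ∧ (∑ a, m a) = γx ∧ (∀ a, 0 < m a → a ∈ S) ∧
        (∀ a, 0 < m a → a ∈ T) ∧ ∀ a, |m a - m₀ a| ≤ N * δ := by
    rcases eq_or_lt_of_le hγ0nn with h | h
    · -- γ0 = 0 : m₀ = 0, take m = mt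
      have hm₀0 : ∀ a, m₀ a = 0 := by
        intro a
        have h1 : m₀ a ≤ ∑ b, m₀ b :=
          Finset.single_le_sum (fun b _ => hm₀nn b) (Finset.mem_univ a)
        have := hm₀nn a
        rw [hm₀sum, ← h] at h1
        linarith
      refine ⟨mt, hmtnn, hmtsum, ?_, ?_, ?_⟩
      · intro a ha
        have : 0 < r1 a := lt_of_lt_of_le ha (by simp only [hmt]; nlinarith [le_max_right (x a) 0])
        exact h1S a this.ne'
      · intro a ha
        have : 0 < r2 a := lt_of_lt_of_le ha (hmtle' a)
        exact h2T a this.ne'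
      · intro a
        rw [hm₀0 a, sub_zero, abs_of_nonneg (hmtnn a)]
        have h1 : mt a ≤ ∑ b, mt b :=
          Finset.single_le_sum (fun b _ => hmtnn b) (Finset.mem_univ a)
        rw [hmtsum] at h1
        have h2 : |γx - γ0| ≤ N * δ := hγdiff
        rw [← h, sub_zero] at h2
        have h3 := le_abs_self γx
        linarith
    · -- γ0 > 0 : rescale m₀
      refine ⟨fun a => (γx / γ0) * m₀ a, ?_, ?_, ?_, ?_, ?_⟩
      · exact fun a => mul_nonneg (div_nonneg hγxnn h.le) (hm₀nn a)
      · rw [← Finset.mul_sum, hm₀sum, div_mul_cancel₀ _ h.ne']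
      · intro a ha
        have hm₀pos : 0 < m₀ a := by
          by_contra hc
          push_neg at hc
          have : m₀ a = 0 := le_antisymm hc (hm₀nn a)
          simp [this] at ha
        have : 0 < r₀ a := by
          have : max (r₀ a - r₀' a) 0 ≥ 0 := le_max_right _ _
          simp only [hm₀] at hm₀pos
          linarith
        exact h0supp a this.ne'
      · intro a ha
        have hm₀pos : 0 < m₀ a := by
          by_contra hc
          push_neg at hc
          have : m₀ a = 0 := le_antisymm hc (hm₀nn a)
          simp [this] at ha
        have : 0 < r₀' a := lt_of_lt_of_le hm₀pos (hm₀le' a)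
        exact h0'supp a this.ne'
      · intro a
        have hle : m₀ a ≤ γ0 := by
          have := Finset.single_le_sum (fun b _ => hm₀nn b) (Finset.mem_univ a)
          rwa [hm₀sum] at this
        have : (γx / γ0) * m₀ a - m₀ a = (γx - γ0) * (m₀ a / γ0) := by
          field_simp
        rw [this, abs_mul]
        have h1 : |m₀ a / γ0| ≤ 1 := by
          rw [abs_of_nonneg (div_nonneg (hm₀nn a) h.le)]
          rw [div_le_one h]
          exact hle
        calc |γx - γ0| * |m₀ a / γ0| ≤ |γx - γ0| * 1 :=
              mul_le_mul_of_nonneg_left h1 (abs_nonneg _)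
          _ = |γx - γ0| := mul_one _
          _ ≤ N * δ := hγdiff
  -- the representation of x
  refine ⟨fun a => max (x a) 0 + m a, fun a => max (-x a) 0 + m a, ?_, ?_, ?_, ?_, ?_, ?_, ?_, ?_⟩
  · -- membership in R
    apply hball
    rw [Metric.mem_ball, Prod.dist_eq]
    have hr0id : ∀ a, r₀ a = max (r₀ a - r₀' a) 0 + m₀ a := fun a => by
      simp [hm₀]
    have key : ∀ a, |max (x a) 0 + m a - r₀ a| ≤ (N + 1) * δ := by
      intro a
      rw [hr0id a]
      have h1 : |max (x a) 0 - max (r₀ a - r₀' a) 0| ≤ δ :=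
        le_trans (abs_max_sub_max_le_abs _ _ _) (hclose a).le
      have h2 := hmclose a
      calc |max (x a) 0 + m a - (max (r₀ a - r₀' a) 0 + m₀ a)|
          = |(max (x a) 0 - max (r₀ a - r₀' a) 0) + (m a - m₀ a)| := by ring_nf
        _ ≤ |max (x a) 0 - max (r₀ a - r₀' a) 0| + |m a - m₀ a| := abs_add_le _ _
        _ ≤ δ + N * δ := add_le_add h1 h2
        _ = (N + 1) * δ := by ring
    have key' : ∀ a, |max (-x a) 0 + m a - r₀' a| ≤ (N + 2) * δ := by
      intro a
      have h1 := key a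
      have h2 := (hclose a).le
      have heq : max (-x a) 0 + m a - r₀' a
          = (max (x a) 0 + m a - r₀ a) - (x a - (r₀ a - r₀' a)) := by
        rw [hmaxneg (x a)]; ring
      rw [heq]
      calc |(max (x a) 0 + m a - r₀ a) - (x a - (r₀ a - r₀' a))|
          ≤ |max (x a) 0 + m a - r₀ a| + |x a - (r₀ a - r₀' a)| := abs_sub _ _
        _ ≤ (N + 1) * δ + δ := add_le_add h1 h2
        _ = (N + 2) * δ := by ring
    have hbound : (N + 2) * δ < ε := by
      have h2 : (N + 2) * (ε / (2 * (N + 2))) = ε / 2 := by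
        field_simp
      rw [hδ, h2]
      linarith
    apply max_lt
    · rw [dist_pi_lt_iff hε]
      intro a
      rw [Real.dist_eq]
      exact lt_of_le_of_lt (key a) (lt_of_le_of_lt (by nlinarith [hδpos.le, hNnn]) hbound)
    · rw [dist_pi_lt_iff hε]
      intro a
      rw [Real.dist_eq]
      exact lt_of_le_of_lt (key' a) hbound
  · exact fun a => add_nonneg (le_max_right _ _) (hmnn a)
  · rw [Finset.sum_add_distrib, hmsum, hγx]; ring
  · intro a ha
    have hra : 0 < max (x a) 0 + m a :=
      lt_of_le_of_ne (add_nonneg (le_max_right _ _) (hmnn a)) (Ne.symm ha)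
    rcases lt_or_ge 0 (m a) with h | h
    · exact hmS a h
    · have hm0 : m a = 0 := le_antisymm h (hmnn a)
      rw [hm0, add_zero] at hra
      have hxp : 0 < x a := (lt_max_iff.mp hra).resolve_right (lt_irrefl 0)
      have : 0 < r1 a := by rw [hxa a] at hxp; linarith [h2p a]
      exact h1S a this.ne'
  · exact fun a => add_nonneg (le_max_right _ _) (hmnn a)
  · have hsx : ∑ a, x a = 0 := by
      rw [hx]; simp [Finset.sum_sub_distrib, h1s, h2s]
    have : ∑ a, max (-x a) 0 = (∑ a, max (x a) 0) - ∑ a, x a := by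
      rw [← Finset.sum_sub_distrib]
      exact Finset.sum_congr rfl fun a _ => hmaxneg (x a)
    rw [Finset.sum_add_distrib, hmsum, this, hsx, hγx]; ring
  · intro a ha
    have hra : 0 < max (-x a) 0 + m a :=
      lt_of_le_of_ne (add_nonneg (le_max_right _ _) (hmnn a)) (Ne.symm ha)
    rcases lt_or_ge 0 (m a) with h | h
    · exact hmT a h
    · have hm0 : m a = 0 := le_antisymm h (hmnn a)
      rw [hm0, add_zero] at hra
      have hxp : 0 < -x a := (lt_max_iff.mp hra).resolve_right (lt_irrefl 0)
      have : 0 < r2 a := by rw [hxa a] at hxp; linarith [h1p a]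
      exact h2T a this.ne'
  · funext a
    simp only [Pi.sub_apply]
    rw [hmaxneg (x a)]
    ring
end

section
/- Let u₀ ∈ ℝⁿ, let D = conv{v₁, v₂} with v₁, v₂ linearly independent, and let x₀ ∈ D with u₀·x₀ = 0. Then for every ε > 0 there exists a nonempty open set U ⊆ ℝⁿ × ℝⁿ with U ⊆ B_ε(u₀, u₀) such that for every (u₁, u₂) ∈ U there exists x ∈ D ∩ B_ε(x₀) with u₁·x = 0 ≥ u₂·x. -/
open RealInnerProductSpace

lemma pair_swap {E : Type*} [AddCommGroup E] [Module ℝ E] {x y : E}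
    (h : LinearIndependent ℝ ![x, y]) : LinearIndependent ℝ ![y, x] := by
  rw [LinearIndependent.pair_iff] at h ⊢
  intro s t hst
  obtain ⟨h1, h2⟩ := h t s (by rw [add_comm]; exact hst)
  exact ⟨h2, h1⟩

lemma exists_dual {E : Type*} [NormedAddCommGroup E] [InnerProductSpace ℝ E] {x d : E}
    (h : LinearIndependent ℝ ![x, d]) : ∃ q : E, ⟪q, x⟫ = 0 ∧ ⟪q, d⟫ = 1 := by
  have hx : x ≠ 0 := by
    intro h0
    exact (h.ne_zero 0) (by simp [h0])
  have hnx : (‖x‖ : ℝ)^2 ≠ 0 := pow_ne_zero 2 (norm_ne_zero_iff.mpr hx)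
  set c : ℝ := ⟪x, d⟫ / ‖x‖^2 with hc
  set e : E := d - c • x with he
  have hex : ⟪e, x⟫ = 0 := by
    rw [he, inner_sub_left, real_inner_smul_left, hc, real_inner_comm x d,
      real_inner_self_eq_norm_sq, div_mul_cancel₀ _ hnx, sub_self]
  have hene : e ≠ 0 := by
    intro h0
    have hd : c • x + (-1 : ℝ) • d = 0 := by
      rw [he, sub_eq_zero] at h0
      simp [← h0]
    have := (LinearIndependent.pair_iff.1 h c (-1) hd).2
    norm_num at this
  have hne : (‖e‖ : ℝ)^2 ≠ 0 := pow_ne_zero 2 (norm_ne_zero_iff.mpr hene)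
  refine ⟨(‖e‖^2)⁻¹ • e, ?_, ?_⟩
  · rw [real_inner_smul_left, hex, mul_zero]
  · have hed : ⟪e, d⟫ = ‖e‖^2 := by
      have hde : d = e + c • x := by rw [he]; abel
      calc ⟪e, d⟫ = ⟪e, e⟫ + c * ⟪e, x⟫ := by
            rw [hde, inner_add_right, real_inner_smul_right]
        _ = ‖e‖^2 := by rw [hex, mul_zero, add_zero, real_inner_self_eq_norm_sq]
    rw [real_inner_smul_left, hed, inv_mul_cancel₀ hne]

lemma seg_dir {E : Type*} [NormedAddCommGroup E] [InnerProductSpace ℝ E]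
    {v₁ v₂ x₀ : E} (hli : LinearIndependent ℝ ![v₁, v₂])
    (hx₀ : x₀ ∈ segment ℝ v₁ v₂) :
    ∃ d : E, ∃ r : ℝ, 0 < r ∧ LinearIndependent ℝ ![x₀, d] ∧
      ∀ t : ℝ, 0 ≤ t → t ≤ r → x₀ + t • d ∈ segment ℝ v₁ v₂ := by
  obtain ⟨a, b, ha, hb, hab, hx⟩ := hx₀
  have hli' := LinearIndependent.pair_iff.1 hli
  rcases lt_or_ge b 1 with hb1 | hb1
  · refine ⟨v₂ - v₁, 1 - b, by linarith, ?_, ?_⟩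
    · rw [LinearIndependent.pair_iff]
      intro s t hst
      have h0 : (s*a - t) • v₁ + (s*b + t) • v₂ = 0 := by
        rw [← hst, ← hx]; module
      obtain ⟨h1, h2⟩ := hli' _ _ h0
      constructor <;> nlinarith
    · intro t ht0 htr
      refine ⟨a - t, b + t, by linarith, by linarith, by linarith, ?_⟩
      rw [← hx]; module
  · have hb1' : b = 1 := le_antisymm (by linarith) hb1
    have ha0 : a = 0 := by linarith
    refine ⟨v₁ - v₂, 1, one_pos, ?_, ?_⟩
    · rw [LinearIndependent.pair_iff]
      intro s t hst
      have h0 : (s*a + t) • v₁ + (s*b - t) • v₂ = 0 := by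
        rw [← hst, ← hx]; module
      obtain ⟨h1, h2⟩ := hli' _ _ h0
      constructor <;> nlinarith
    · intro t ht0 htr
      refine ⟨a + t, b - t, by linarith, by linarith, by linarith, ?_⟩
      rw [← hx]; module

set_option maxHeartbeats 1000000 in
theorem stmt_12 (n : ℕ) (u₀ v₁ v₂ x₀ : EuclideanSpace ℝ (Fin n))
    (hli : LinearIndependent ℝ ![v₁, v₂])
    (hx₀ : x₀ ∈ segment ℝ v₁ v₂) (hu₀ : inner ℝ u₀ x₀ = (0 : ℝ)) :
    ∀ ε > (0 : ℝ), ∃ U : Set (EuclideanSpace ℝ (Fin n) × EuclideanSpace ℝ (Fin n)),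
      U.Nonempty ∧ IsOpen U ∧ U ⊆ Metric.ball (u₀, u₀) ε ∧
      ∀ p ∈ U, ∃ x ∈ segment ℝ v₁ v₂ ∩ Metric.ball x₀ ε,
        inner ℝ p.1 x = (0 : ℝ) ∧ inner ℝ p.2 x ≤ (0 : ℝ) := by
  intro ε hε
  obtain ⟨d, r, hr, hind, hseg⟩ := seg_dir hli hx₀
  have hx0ne : x₀ ≠ 0 := by
    intro h0
    exact (hind.ne_zero 0) (by simp [h0])
  obtain ⟨q, hqx, hqd⟩ := exists_dual hind
  obtain ⟨p, hpd, hpx⟩ := exists_dual (pair_swap hind)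
  have hx0pos : (0:ℝ) < ‖x₀‖ := norm_pos_iff.2 hx0ne
  set δ : ℝ := ε / (4 * ‖x₀‖) with hδdef
  have hδ : 0 < δ := by positivity
  set a₀ : ℝ := ⟪u₀, d⟫ with ha₀def
  set K : ℝ := |a₀| + δ * |(⟪x₀, d⟫ : ℝ)| + 1 with hKdef
  have hK : 0 < K := by positivity
  obtain ⟨β, s, hs, hsgn, hβ⟩ :
      ∃ β s : ℝ, (s = 1 ∨ s = -1) ∧ 0 < s * (a₀ + β) ∧ |β| * ‖q‖ ≤ ε/4 := by
    rcases lt_trichotomy a₀ 0 with h | h | h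
    · exact ⟨0, -1, Or.inr rfl, by nlinarith, by simp; positivity⟩
    · refine ⟨ε/(4*(‖q‖+1)), 1, Or.inl rfl, ?_, ?_⟩
      · have : 0 < ε/(4*(‖q‖+1)) := by positivity
        nlinarith
      · have hqn : (0:ℝ) ≤ ‖q‖ := norm_nonneg _
        rw [abs_of_pos (by positivity)]
        rw [div_mul_eq_mul_div, div_le_div_iff₀ (by positivity) (by positivity)]
        nlinarith
    · exact ⟨0, 1, Or.inl rfl, by nlinarith, by simp; positivity⟩
  have hsne : s ≠ 0 := by rcases hs with h | h <;> rw [h] <;> norm_num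
  have hs2 : s * s = 1 := by rcases hs with h | h <;> rw [h] <;> norm_num
  have hsabs : |s| = 1 := by rcases hs with h | h <;> rw [h] <;> norm_num
  set c : ℝ := s * (a₀ + β) / 2 with hcdef
  have hc : 0 < c := div_pos hsgn two_pos
  set τ : ℝ := min r (min (ε / (2*(‖d‖+1)))
      (min (δ * ‖x₀‖^2 / (2*K)) (ε / (2*c*(‖p‖+1))))) with hτdef
  have hτ : 0 < τ := by positivity
  have hτr : τ ≤ r := min_le_left _ _
  have hτε : τ ≤ ε/(2*(‖d‖+1)) := le_trans (min_le_right _ _) (min_le_left _ _)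
  have hτK : τ ≤ δ*‖x₀‖^2/(2*K) :=
    le_trans (min_le_right _ _) (le_trans (min_le_right _ _) (min_le_left _ _))
  have hτp : τ ≤ ε/(2*c*(‖p‖+1)) :=
    le_trans (min_le_right _ _) (le_trans (min_le_right _ _) (min_le_right _ _))
  refine ⟨{z : EuclideanSpace ℝ (Fin n) × EuclideanSpace ℝ (Fin n) | c < s * ⟪z.1, d⟫ ∧ -(c*τ) < s * ⟪z.1, x₀⟫ ∧ s * ⟪z.1, x₀⟫ < 0 ∧
      ⟪z.2, x₀⟫ < -(δ*‖x₀‖^2/2) ∧ |(⟪z.2, d⟫ : ℝ)| < K} ∩ Metric.ball (u₀, u₀) ε,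
    ?_, ?_, Set.inter_subset_right, ?_⟩
  · -- Nonempty
    refine ⟨(u₀ + β • q - (s*(c*τ/2)) • p, u₀ - δ • x₀), ⟨?_, ?_, ?_, ?_, ?_⟩, ?_⟩
    · have h1 : (⟪u₀ + β • q - (s*(c*τ/2)) • p, d⟫ : ℝ) = a₀ + β := by
        rw [inner_sub_left, inner_add_left, real_inner_smul_left, real_inner_smul_left,
          hqd, hpd, ← ha₀def]
        ring
      rw [h1]
      show c < s * (a₀ + β)
      rw [hcdef]; linarith
    · have h2 : (⟪u₀ + β • q - (s*(c*τ/2)) • p, x₀⟫ : ℝ) = -(s*(c*τ/2)) := by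
        rw [inner_sub_left, inner_add_left, real_inner_smul_left, real_inner_smul_left,
          hqx, hpx, hu₀]
        ring
      rw [h2]
      have hss : s * -(s*(c*τ/2)) = -(c*τ/2) := by
        have : s * -(s*(c*τ/2)) = -((s*s)*(c*τ/2)) := by ring
        rw [this, hs2, one_mul]
      rw [hss]; nlinarith [mul_pos hc hτ]
    · have h2 : (⟪u₀ + β • q - (s*(c*τ/2)) • p, x₀⟫ : ℝ) = -(s*(c*τ/2)) := by
        rw [inner_sub_left, inner_add_left, real_inner_smul_left, real_inner_smul_left,
          hqx, hpx, hu₀]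
        ring
      rw [h2]
      have hss : s * -(s*(c*τ/2)) = -(c*τ/2) := by
        have : s * -(s*(c*τ/2)) = -((s*s)*(c*τ/2)) := by ring
        rw [this, hs2, one_mul]
      rw [hss]; nlinarith [mul_pos hc hτ]
    · have h3 : (⟪u₀ - δ • x₀, x₀⟫ : ℝ) = -(δ * ‖x₀‖^2) := by
        rw [inner_sub_left, real_inner_smul_left, hu₀, real_inner_self_eq_norm_sq]
        ring
      rw [h3]
      linarith [mul_pos hδ (pow_pos hx0pos 2)]
    · have h4 : (⟪u₀ - δ • x₀, d⟫ : ℝ) = a₀ - δ * ⟪x₀, d⟫ := by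
        rw [inner_sub_left, real_inner_smul_left, ← ha₀def]
      rw [h4, hKdef]
      calc |a₀ - δ * ⟪x₀, d⟫| ≤ |a₀| + |δ * (⟪x₀, d⟫:ℝ)| := abs_sub _ _
        _ = |a₀| + δ * |(⟪x₀, d⟫:ℝ)| := by rw [abs_mul, abs_of_pos hδ]
        _ < |a₀| + δ * |(⟪x₀, d⟫:ℝ)| + 1 := by linarith
    · -- ball membership of the center
      rw [Metric.mem_ball, Prod.dist_eq]
      apply max_lt
      · have : (u₀ + β • q - (s*(c*τ/2)) • p) - u₀ = β • q - (s*(c*τ/2)) • p := by abel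
        rw [dist_eq_norm, this]
        have hb1 : ‖β • q‖ = |β| * ‖q‖ := by rw [norm_smul, Real.norm_eq_abs]
        have hb2 : ‖(s*(c*τ/2)) • p‖ = (c*τ/2) * ‖p‖ := by
          rw [norm_smul, Real.norm_eq_abs, abs_mul, hsabs, one_mul,
            abs_of_pos (by positivity)]
        have hpn : (0:ℝ) ≤ ‖p‖ := norm_nonneg _
        have hple : (c*τ/2) * ‖p‖ ≤ ε/4 := by
          have := (le_div_iff₀ (by positivity : (0:ℝ) < 2*c*(‖p‖+1))).1 hτp
          nlinarith
        calc ‖β • q - (s*(c*τ/2)) • p‖ ≤ ‖β • q‖ + ‖(s*(c*τ/2)) • p‖ := norm_sub_le _ _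
          _ ≤ ε/4 + ε/4 := by rw [hb1, hb2]; linarith
          _ < ε := by linarith
      · rw [dist_eq_norm]
        have : (u₀ - δ • x₀) - u₀ = -(δ • x₀) := by abel
        rw [this, norm_neg, norm_smul, Real.norm_eq_abs, abs_of_pos hδ, hδdef]
        rw [div_mul_eq_mul_div, div_lt_iff₀ (by positivity)]
        nlinarith
  · -- open
    apply IsOpen.inter ?_ Metric.isOpen_ball
    have cd : Continuous fun z : EuclideanSpace ℝ (Fin n) × EuclideanSpace ℝ (Fin n) => (⟪z.1, d⟫ : ℝ) :=
      continuous_fst.inner continuous_const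
    have cx : Continuous fun z : EuclideanSpace ℝ (Fin n) × EuclideanSpace ℝ (Fin n) => (⟪z.1, x₀⟫ : ℝ) :=
      continuous_fst.inner continuous_const
    have cd2 : Continuous fun z : EuclideanSpace ℝ (Fin n) × EuclideanSpace ℝ (Fin n) => (⟪z.2, d⟫ : ℝ) :=
      continuous_snd.inner continuous_const
    have cx2 : Continuous fun z : EuclideanSpace ℝ (Fin n) × EuclideanSpace ℝ (Fin n) => (⟪z.2, x₀⟫ : ℝ) :=
      continuous_snd.inner continuous_const
    exact (isOpen_lt continuous_const (continuous_const.mul cd)).and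
      ((isOpen_lt continuous_const (continuous_const.mul cx)).and
      ((isOpen_lt (continuous_const.mul cx) continuous_const).and
      ((isOpen_lt cx2 continuous_const).and
      (isOpen_lt (continuous_abs.comp cd2) continuous_const))))
  · -- main property
    rintro z ⟨⟨h1, h2, h3, h4, h5⟩, hzb⟩
    set A : ℝ := ⟪z.1, x₀⟫ with hAdef
    set B : ℝ := ⟪z.1, d⟫ with hBdef
    have hsB : 0 < s * B := lt_trans hc h1
    have hBne : B ≠ 0 := by
      intro h0
      rw [h0, mul_zero] at hsB
      exact lt_irrefl _ hsB
    set t : ℝ := -(s*A) / (s*B) with htdef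
    have ht0 : 0 < t := div_pos (by linarith) hsB
    have htτ : t < τ := by
      rw [htdef, div_lt_iff₀ hsB]
      nlinarith
    have htAB : t = -A / B := by
      rw [htdef, neg_div, neg_div, mul_div_mul_left A B hsne]
    refine ⟨x₀ + t • d, ⟨hseg t ht0.le (le_trans htτ.le hτr), ?_⟩, ?_, ?_⟩
    · rw [Metric.mem_ball, dist_eq_norm, add_sub_cancel_left, norm_smul,
        Real.norm_eq_abs, abs_of_pos ht0]
      have hdn : (0:ℝ) ≤ ‖d‖ := norm_nonneg _
      have := (le_div_iff₀ (by positivity : (0:ℝ) < 2*(‖d‖+1))).1 hτε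
      nlinarith
    · have : (⟪z.1, x₀ + t • d⟫ : ℝ) = A + t * B := by
        rw [inner_add_right, real_inner_smul_right, ← hAdef, ← hBdef]
      rw [this, htAB, neg_div, neg_mul, div_mul_cancel₀ A hBne]
      ring
    · have hcomp : (⟪z.2, x₀ + t • d⟫ : ℝ) = ⟪z.2, x₀⟫ + t * ⟪z.2, d⟫ := by
        rw [inner_add_right, real_inner_smul_right]
      rw [hcomp]
      have hab : t * (⟪z.2, d⟫:ℝ) ≤ t * |(⟪z.2, d⟫:ℝ)| :=
        mul_le_mul_of_nonneg_left (le_abs_self _) ht0.le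
      have htK : t * |(⟪z.2, d⟫:ℝ)| ≤ τ * K := by
        apply mul_le_mul htτ.le h5.le (abs_nonneg _) hτ.le
      have hτK2 : τ * K ≤ δ*‖x₀‖^2/2 := by
        have := (le_div_iff₀ (by positivity : (0:ℝ) < 2*K)).1 hτK
        nlinarith
      have h6 : t * (⟪z.2, d⟫ : ℝ) ≤ δ*‖x₀‖^2/2 := le_trans (le_trans hab htK) hτK2
      linarith [h4, h6]
end

section
/- Let u₀ ∈ ℝⁿ, let D = conv{v₁, v₂, v₃} with v₁, v₂, v₃ linearly independent, and let x₀ ∈ D with u₀·x₀ = 0. Then for every ε > 0 there exists a nonempty open set U ⊆ ℝⁿ × ℝⁿ with U ⊆ B_ε(u₀, u₀) such that for every (u₁, u₂) ∈ U there exists x ∈ D ∩ B_ε(x₀) with u₁·x = 0 and u₂·x = 0. -/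
open Metric Set
open scoped RealInnerProductSpace

set_option maxHeartbeats 1000000 in
theorem stmt_13 (n : ℕ) (u₀ v₁ v₂ v₃ x₀ : EuclideanSpace ℝ (Fin n))
    (hli : LinearIndependent ℝ ![v₁, v₂, v₃])
    (hx₀ : x₀ ∈ convexHull ℝ {v₁, v₂, v₃}) (hu₀ : inner ℝ u₀ x₀ = (0 : ℝ)) :
    ∀ ε > (0 : ℝ), ∃ U : Set (EuclideanSpace ℝ (Fin n) × EuclideanSpace ℝ (Fin n)),
      U.Nonempty ∧ IsOpen U ∧ U ⊆ Metric.ball (u₀, u₀) ε ∧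
      ∀ p ∈ U, ∃ x ∈ convexHull ℝ {v₁, v₂, v₃} ∩ Metric.ball x₀ ε,
        inner ℝ p.1 x = (0 : ℝ) ∧ inner ℝ p.2 x = (0 : ℝ) := by
  intro ε hε
  classical
  set d₁ : EuclideanSpace ℝ (Fin n) := v₂ - v₁ with hd₁def
  set d₂ : EuclideanSpace ℝ (Fin n) := v₃ - v₁ with hd₂def
  set A11 : EuclideanSpace ℝ (Fin n) × EuclideanSpace ℝ (Fin n) → ℝ := fun p => ⟪p.1, d₁⟫ with hA11
  set A12 : EuclideanSpace ℝ (Fin n) × EuclideanSpace ℝ (Fin n) → ℝ := fun p => ⟪p.1, d₂⟫ with hA12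
  set A21 : EuclideanSpace ℝ (Fin n) × EuclideanSpace ℝ (Fin n) → ℝ := fun p => ⟪p.2, d₁⟫ with hA21
  set A22 : EuclideanSpace ℝ (Fin n) × EuclideanSpace ℝ (Fin n) → ℝ := fun p => ⟪p.2, d₂⟫ with hA22
  set B1 : EuclideanSpace ℝ (Fin n) × EuclideanSpace ℝ (Fin n) → ℝ := fun p => ⟪p.1, v₁⟫ with hB1
  set B2 : EuclideanSpace ℝ (Fin n) × EuclideanSpace ℝ (Fin n) → ℝ := fun p => ⟪p.2, v₁⟫ with hB2
  set det : EuclideanSpace ℝ (Fin n) × EuclideanSpace ℝ (Fin n) → ℝ :=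
    fun p => A11 p * A22 p - A12 p * A21 p with hdetdef
  set Ns : EuclideanSpace ℝ (Fin n) × EuclideanSpace ℝ (Fin n) → ℝ :=
    fun p => B2 p * A12 p - B1 p * A22 p with hNs
  set Nt : EuclideanSpace ℝ (Fin n) × EuclideanSpace ℝ (Fin n) → ℝ :=
    fun p => B1 p * A21 p - B2 p * A11 p with hNt
  set xf : EuclideanSpace ℝ (Fin n) × EuclideanSpace ℝ (Fin n) → EuclideanSpace ℝ (Fin n) :=
    fun p => v₁ + (Ns p / det p) • d₁ + (Nt p / det p) • d₂ with hxf
  -- continuity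
  have cA11 : Continuous A11 := continuous_fst.inner continuous_const
  have cA12 : Continuous A12 := continuous_fst.inner continuous_const
  have cA21 : Continuous A21 := continuous_snd.inner continuous_const
  have cA22 : Continuous A22 := continuous_snd.inner continuous_const
  have cB1 : Continuous B1 := continuous_fst.inner continuous_const
  have cB2 : Continuous B2 := continuous_snd.inner continuous_const
  have cdet : Continuous det := ((cA11.mul cA22).sub (cA12.mul cA21))
  have cNs : Continuous Ns := ((cB2.mul cA12).sub (cB1.mul cA22))
  have cNt : Continuous Nt := ((cB1.mul cA21).sub (cB2.mul cA11))
  set O : Set (EuclideanSpace ℝ (Fin n) × EuclideanSpace ℝ (Fin n)) := {p | det p ≠ 0} with hO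
  have hOopen : IsOpen O := isOpen_ne_fun cdet continuous_const
  have cxf : ContinuousOn xf O := by
    apply ContinuousOn.add
    apply ContinuousOn.add continuousOn_const
    · exact ((cNs.continuousOn.div cdet.continuousOn fun p hp => hp).smul continuousOn_const)
    · exact ((cNt.continuousOn.div cdet.continuousOn fun p hp => hp).smul continuousOn_const)
  set S : Set (EuclideanSpace ℝ (Fin n) × EuclideanSpace ℝ (Fin n)) :=
    {p | 0 < Ns p * det p ∧ 0 < Nt p * det p ∧
      0 < (det p - Ns p - Nt p) * det p ∧ xf p ∈ ball x₀ ε} with hS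
  have hSsub : ∀ p ∈ S, det p ≠ 0 := by
    rintro p ⟨h1, -, -, -⟩ h
    rw [h, mul_zero] at h1
    exact lt_irrefl 0 h1
  have hSopen : IsOpen S := by
    have : S = ((O ∩ xf ⁻¹' ball x₀ ε) ∩ ({p | 0 < Ns p * det p} ∩ ({p | 0 < Nt p * det p}
        ∩ {p | 0 < (det p - Ns p - Nt p) * det p}))) := by
      ext p
      constructor
      · rintro ⟨h1, h2, h3, h4⟩
        exact ⟨⟨hSsub p ⟨h1, h2, h3, h4⟩, h4⟩, h1, h2, h3⟩
      · rintro ⟨⟨-, h4⟩, h1, h2, h3⟩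
        exact ⟨h1, h2, h3, h4⟩
    rw [this]
    refine (cxf.isOpen_inter_preimage hOopen isOpen_ball).inter
      ((isOpen_lt continuous_const (cNs.mul cdet)).inter
        ((isOpen_lt continuous_const (cNt.mul cdet)).inter
          (isOpen_lt continuous_const (((cdet.sub cNs).sub cNt).mul cdet))))
  -- main membership property
  have hmain : ∀ p ∈ S, xf p ∈ convexHull ℝ {v₁, v₂, v₃} ∩ ball x₀ ε ∧
      ⟪p.1, xf p⟫ = 0 ∧ ⟪p.2, xf p⟫ = 0 := by
    intro p hp
    obtain ⟨h1, h2, h3, h4⟩ := hp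
    have hdet : det p ≠ 0 := hSsub p ⟨h1, h2, h3, h4⟩
    set s : ℝ := Ns p / det p with hsdef
    set t : ℝ := Nt p / det p with htdef
    have hdet2 : 0 < det p * det p := by
      rcases hdet.lt_or_gt with h | h
      · exact mul_pos_of_neg_of_neg h h
      · exact mul_pos h h
    have hs : 0 < s := by
      rw [hsdef, ← mul_div_mul_right _ _ hdet]
      exact div_pos h1 hdet2
    have ht : 0 < t := by
      rw [htdef, ← mul_div_mul_right _ _ hdet]
      exact div_pos h2 hdet2
    have hst : s + t < 1 := by
      have h5 : 0 < (det p - Ns p - Nt p) / det p := by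
        rw [← mul_div_mul_right _ _ hdet]
        exact div_pos h3 hdet2
      have heq : (det p - Ns p - Nt p) / det p = 1 - s - t := by
        rw [hsdef, htdef]
        field_simp
        try ring
      rw [heq] at h5
      linarith
    have hxcomb : xf p = (1 - s - t) • v₁ + s • v₂ + t • v₃ := by
      show v₁ + s • d₁ + t • d₂ = _
      rw [hd₁def, hd₂def]
      module
    have hhull : xf p ∈ convexHull ℝ ({v₁, v₂, v₃} : Set (EuclideanSpace ℝ (Fin n))) := by
      have := Convex.sum_mem (t := (Finset.univ : Finset (Fin 3)))
        (w := ![1 - s - t, s, t]) (z := ![v₁, v₂, v₃])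
        (convex_convexHull ℝ ({v₁, v₂, v₃} : Set (EuclideanSpace ℝ (Fin n))))
        (by intro i _; fin_cases i <;> simp <;> linarith)
        (by simp [Fin.sum_univ_three]; ring)
        (by intro i _; apply subset_convexHull; fin_cases i <;> simp)
      simp only [Fin.sum_univ_three] at this
      rw [hxcomb]
      simpa using this
    have hip : ∀ u : EuclideanSpace ℝ (Fin n), ⟪u, xf p⟫ = ⟪u, v₁⟫ + s * ⟪u, d₁⟫ + t * ⟪u, d₂⟫ := by
      intro u
      show ⟪u, v₁ + s • d₁ + t • d₂⟫ = _
      rw [inner_add_right, inner_add_right, real_inner_smul_right, real_inner_smul_right]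
    have h1' : ⟪p.1, xf p⟫ = 0 := by
      rw [hip]
      show B1 p + s * A11 p + t * A12 p = 0
      rw [hsdef, htdef, hNs, hNt]
      field_simp
      try ring
    have h2' : ⟪p.2, xf p⟫ = 0 := by
      rw [hip]
      show B2 p + s * A21 p + t * A22 p = 0
      rw [hsdef, htdef, hNs, hNt]
      field_simp
      try ring
    exact ⟨⟨hhull, h4⟩, h1', h2'⟩
  -- nonemptiness: center point
  have hcenter : ∃ p₀, p₀ ∈ S ∧ p₀ ∈ ball ((u₀, u₀) :
      EuclideanSpace ℝ (Fin n) × EuclideanSpace ℝ (Fin n)) ε := by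
    -- linear independence workhorse
    have hli3 : ∀ α β γ : ℝ, α • v₁ + β • v₂ + γ • v₃ = 0 → α = 0 ∧ β = 0 ∧ γ = 0 := by
      intro α β γ h
      have := (Fintype.linearIndependent_iff.mp hli) ![α, β, γ] (by
        simpa [Fin.sum_univ_three] using h)
      exact ⟨this 0, this 1, this 2⟩
    -- coefficients of x₀
    obtain ⟨a, b, c, ha, hb, hc, habc, hx0eq⟩ :
        ∃ a b c : ℝ, 0 ≤ a ∧ 0 ≤ b ∧ 0 ≤ c ∧ a + b + c = 1 ∧
          x₀ = a • v₁ + b • v₂ + c • v₃ := by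
      rw [show ({v₁, v₂, v₃} : Set (EuclideanSpace ℝ (Fin n))) = insert v₁ {v₂, v₃} from rfl,
        convexHull_insert ⟨v₂, by simp⟩, convexHull_pair] at hx₀
      rw [mem_convexJoin] at hx₀
      obtain ⟨y, hy, z, hz, hseg⟩ := hx₀
      simp only [mem_singleton_iff] at hy
      subst hy
      obtain ⟨p', q', hp', hq', hpq', hzeq⟩ := hz
      obtain ⟨r', s', hr', hs', hrs', hxeq⟩ := hseg
      refine ⟨r', s' * p', s' * q', hr', by positivity, by positivity,
        by linear_combination s' * hpq' + hrs', ?_⟩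
      rw [← hxeq, ← hzeq]
      module
    have hx₀ne : x₀ ≠ 0 := by
      intro h
      rw [h] at hx0eq
      obtain ⟨h1, h2, h3⟩ := hli3 a b c hx0eq.symm
      rw [h1, h2, h3] at habc
      norm_num at habc
    obtain ⟨N, hNdef⟩ : ∃ N : ℝ, N = ‖x₀‖ := ⟨_, rfl⟩
    have hN : 0 < N := by rw [hNdef]; exact norm_pos_iff.mpr hx₀ne
    obtain ⟨g, hgdef⟩ : ∃ g : EuclideanSpace ℝ (Fin n), g = (3 : ℝ)⁻¹ • (v₁ + v₂ + v₃) :=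
      ⟨_, rfl⟩
    obtain ⟨M, hMdef⟩ : ∃ M : ℝ, M = ‖g - x₀‖ + 1 := ⟨_, rfl⟩
    have hM : 0 < M := by rw [hMdef]; positivity
    obtain ⟨Kc, hKcdef⟩ : ∃ Kc : ℝ, Kc = |⟪u₀, g - x₀⟫| + 1 := ⟨_, rfl⟩
    have hKc : 0 < Kc := by rw [hKcdef]; positivity
    obtain ⟨θ, hθdef⟩ : ∃ θ : ℝ,
        θ = min (min (ε / (2 * M)) (N / (2 * M))) (min (ε * N / (8 * Kc)) 1) := ⟨_, rfl⟩
    have hθ : 0 < θ := by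
      rw [hθdef]
      exact lt_min (lt_min (div_pos hε (by linarith)) (div_pos hN (by linarith)))
        (lt_min (div_pos (mul_pos hε hN) (by linarith)) one_pos)
    have hθ1 : θ ≤ ε / (2 * M) := by
      rw [hθdef]; exact le_trans (min_le_left _ _) (min_le_left _ _)
    have hθ2 : θ ≤ N / (2 * M) := by
      rw [hθdef]; exact le_trans (min_le_left _ _) (min_le_right _ _)
    have hθ3 : θ ≤ ε * N / (8 * Kc) := by
      rw [hθdef]; exact le_trans (min_le_right _ _) (min_le_left _ _)
    have hθ4 : θ ≤ 1 := by
      rw [hθdef]; exact le_trans (min_le_right _ _) (min_le_right _ _)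
    obtain ⟨a', ha'def⟩ : ∃ x : ℝ, x = (1 - θ) * a + θ / 3 := ⟨_, rfl⟩
    obtain ⟨b', hb'def⟩ : ∃ x : ℝ, x = (1 - θ) * b + θ / 3 := ⟨_, rfl⟩
    obtain ⟨c', hc'def⟩ : ∃ x : ℝ, x = (1 - θ) * c + θ / 3 := ⟨_, rfl⟩
    have ha' : 0 < a' := by
      have : 0 ≤ (1 - θ) * a := mul_nonneg (by linarith) ha
      rw [ha'def]; linarith
    have hb' : 0 < b' := by
      have : 0 ≤ (1 - θ) * b := mul_nonneg (by linarith) hb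
      rw [hb'def]; linarith
    have hc' : 0 < c' := by
      have : 0 ≤ (1 - θ) * c := mul_nonneg (by linarith) hc
      rw [hc'def]; linarith
    have habc' : a' + b' + c' = 1 := by
      rw [ha'def, hb'def, hc'def]
      linear_combination (1 - θ) * habc
    obtain ⟨xs, hxsdef⟩ : ∃ x : EuclideanSpace ℝ (Fin n),
        x = a' • v₁ + b' • v₂ + c' • v₃ := ⟨_, rfl⟩
    have hdiff : xs - x₀ = θ • (g - x₀) := by
      rw [hxsdef, hx0eq, hgdef, ha'def, hb'def, hc'def]
      module
    have hnormdiff : ‖xs - x₀‖ = θ * ‖g - x₀‖ := by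
      rw [hdiff, norm_smul, Real.norm_eq_abs, abs_of_pos hθ]
    have hgM : ‖g - x₀‖ < M := by rw [hMdef]; linarith
    have hMeq1 : ε / (2 * M) * M = ε / 2 := by field_simp
    have hMeq2 : N / (2 * M) * M = N / 2 := by field_simp
    have hxsx₀ : ‖xs - x₀‖ < ε / 2 := by
      rw [hnormdiff]
      calc θ * ‖g - x₀‖ < θ * M := mul_lt_mul_of_pos_left hgM hθ
        _ ≤ ε / (2 * M) * M := mul_le_mul_of_nonneg_right hθ1 (le_of_lt hM)
        _ = ε / 2 := hMeq1
    have hxsx₀' : ‖xs - x₀‖ ≤ N / 2 := by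
      rw [hnormdiff]
      calc θ * ‖g - x₀‖ ≤ θ * M := le_of_lt (mul_lt_mul_of_pos_left hgM hθ)
        _ ≤ N / (2 * M) * M := mul_le_mul_of_nonneg_right hθ2 (le_of_lt hM)
        _ = N / 2 := hMeq2
    have hNxs : N / 2 ≤ ‖xs‖ := by
      have h1 : ‖x₀‖ - ‖xs‖ ≤ ‖x₀ - xs‖ := norm_sub_norm_le _ _
      rw [norm_sub_rev] at h1
      rw [← hNdef] at h1
      linarith
    have hxspos : 0 < ‖xs‖ := by linarith
    obtain ⟨δ, hδdef⟩ : ∃ d : ℝ, d = ⟪u₀, xs⟫ := ⟨_, rfl⟩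
    have hδeq : δ = θ * ⟪u₀, g - x₀⟫ := by
      have hxseq : xs = x₀ + θ • (g - x₀) := by
        have h := hdiff
        rw [sub_eq_iff_eq_add] at h
        rw [h]; abel
      rw [hδdef, hxseq, inner_add_right, real_inner_smul_right, hu₀, zero_add]
    have hKceq : ε * N / (8 * Kc) * Kc = ε * N / 8 := by field_simp
    have hδbound : |δ| < ε * N / 8 := by
      rw [hδeq, abs_mul, abs_of_pos hθ]
      calc θ * |⟪u₀, g - x₀⟫| < θ * Kc := by
            apply mul_lt_mul_of_pos_left _ hθ
            rw [hKcdef]; linarith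
        _ ≤ ε * N / (8 * Kc) * Kc := mul_le_mul_of_nonneg_right hθ3 (le_of_lt hKc)
        _ = ε * N / 8 := hKceq
    obtain ⟨u', hu'def⟩ : ∃ u : EuclideanSpace ℝ (Fin n),
        u = u₀ - (δ / ‖xs‖ ^ 2) • xs := ⟨_, rfl⟩
    have hu'xs : ⟪u', xs⟫ = 0 := by
      rw [hu'def, inner_sub_left, real_inner_smul_left, real_inner_self_eq_norm_sq, ← hδdef]
      field_simp
      ring
    have hu'dist : ‖u' - u₀‖ < ε / 4 := by
      have h1 : u' - u₀ = -((δ / ‖xs‖ ^ 2) • xs) := by rw [hu'def]; abel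
      have h2 : ‖u' - u₀‖ = |δ| / ‖xs‖ := by
        rw [h1, norm_neg, norm_smul, Real.norm_eq_abs, abs_div, abs_of_pos (by positivity :
          (0:ℝ) < ‖xs‖ ^ 2)]
        field_simp
      rw [h2, div_lt_iff₀ hxspos]
      have h3 : ε / 4 * (N / 2) ≤ ε / 4 * ‖xs‖ :=
        mul_le_mul_of_nonneg_left hNxs (by positivity)
      have h4 : ε / 4 * (N / 2) = ε * N / 8 := by ring
      linarith
    -- orthogonal complement vectors
    have hwgen : ∀ y z dd : EuclideanSpace ℝ (Fin n),
        dd ∉ Submodule.span ℝ ({y, z} : Set (EuclideanSpace ℝ (Fin n))) →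
        ∃ w : EuclideanSpace ℝ (Fin n), ⟪w, y⟫ = 0 ∧ ⟪w, z⟫ = 0 ∧ 0 < ⟪w, dd⟫ := by
      intro y z dd hnot
      set K : Submodule ℝ (EuclideanSpace ℝ (Fin n)) := Submodule.span ℝ {y, z} with hK
      set w : EuclideanSpace ℝ (Fin n) :=
        dd - (K.orthogonalProjectionOnto dd : EuclideanSpace ℝ (Fin n)) with hw
      have hmem : w ∈ Kᗮ := Submodule.sub_starProjection_mem_orthogonal (K := K) dd
      have h1 : ⟪w, y⟫ = 0 := by
        rw [real_inner_comm]
        exact (Submodule.mem_orthogonal K w).mp hmem y (Submodule.subset_span (by simp))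
      have h2 : ⟪w, z⟫ = 0 := by
        rw [real_inner_comm]
        exact (Submodule.mem_orthogonal K w).mp hmem z (Submodule.subset_span (by simp))
      have hwne : w ≠ 0 := by
        intro h
        apply hnot
        have hd : dd = (K.orthogonalProjectionOnto dd : EuclideanSpace ℝ (Fin n)) := by
          rwa [sub_eq_zero] at h
        rw [hd]
        exact SetLike.coe_mem _
      have h3 : ⟪w, dd⟫ = ‖w‖ ^ 2 := by
        have hd : dd = w + (K.orthogonalProjectionOnto dd : EuclideanSpace ℝ (Fin n)) := by
          rw [hw]; abel
        rw [hd, inner_add_right, real_inner_self_eq_norm_sq, real_inner_comm,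
          (Submodule.mem_orthogonal K w).mp hmem _ (SetLike.coe_mem _), add_zero]
      exact ⟨w, h1, h2, by rw [h3]; exact pow_pos (norm_pos_iff.mpr hwne) 2⟩
    have hnot1 : d₁ ∉ Submodule.span ℝ ({xs, d₂} : Set (EuclideanSpace ℝ (Fin n))) := by
      intro h
      obtain ⟨α, β, hq⟩ := Submodule.mem_span_pair.mp h
      have h0 : (α * a' - β + 1) • v₁ + (α * b' - 1) • v₂ + (α * c' + β) • v₃ = 0 := by
        have h1 : α • xs + β • d₂ - d₁ = 0 := by rw [hq]; abel
        rw [hxsdef, hd₂def, hd₁def] at h1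
        rw [← h1]
        module
      obtain ⟨e₁, e₂, e₃⟩ := hli3 _ _ _ h0
      have hα : α = 0 := by linear_combination e₁ + e₂ + e₃ - α * habc'
      rw [hα] at e₂
      norm_num at e₂
    have hnot2 : d₂ ∉ Submodule.span ℝ ({xs, d₁} : Set (EuclideanSpace ℝ (Fin n))) := by
      intro h
      obtain ⟨α, β, hq⟩ := Submodule.mem_span_pair.mp h
      have h0 : (α * a' - β + 1) • v₁ + (α * b' + β) • v₂ + (α * c' - 1) • v₃ = 0 := by
        have h1 : α • xs + β • d₁ - d₂ = 0 := by rw [hq]; abel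
        rw [hxsdef, hd₂def, hd₁def] at h1
        rw [← h1]
        module
      obtain ⟨e₁, e₂, e₃⟩ := hli3 _ _ _ h0
      have hα : α = 0 := by linear_combination e₁ + e₂ + e₃ - α * habc'
      rw [hα] at e₃
      norm_num at e₃
    obtain ⟨w₁, hw₁xs, hw₁d₂, hk₁pos'⟩ := hwgen xs d₂ d₁ hnot1
    obtain ⟨w₂, hw₂xs, hw₂d₁, hk₂pos'⟩ := hwgen xs d₁ d₂ hnot2
    obtain ⟨k₁, hk₁def⟩ : ∃ k : ℝ, k = ⟪w₁, d₁⟫ := ⟨_, rfl⟩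
    obtain ⟨k₂, hk₂def⟩ : ∃ k : ℝ, k = ⟪w₂, d₂⟫ := ⟨_, rfl⟩
    obtain ⟨m₁, hm₁def⟩ : ∃ m : ℝ, m = ⟪u', d₁⟫ := ⟨_, rfl⟩
    obtain ⟨m₂, hm₂def⟩ : ∃ m : ℝ, m = ⟪u', d₂⟫ := ⟨_, rfl⟩
    have hk₁ : 0 < k₁ := by rw [hk₁def]; exact hk₁pos'
    have hk₂ : 0 < k₂ := by rw [hk₂def]; exact hk₂pos'
    obtain ⟨Bd, hBddef⟩ : ∃ x : ℝ,
        x = min (ε / (4 * (‖w₁‖ + 1))) (ε / (4 * (‖w₂‖ + 1))) := ⟨_, rfl⟩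
    have hBd : 0 < Bd := by
      rw [hBddef]
      exact lt_min (div_pos hε (by positivity)) (div_pos hε (by positivity))
    obtain ⟨η, hη0, hηB, hηne⟩ : ∃ η : ℝ, 0 < η ∧ η ≤ Bd ∧
        (k₁ * m₂ + k₂ * m₁) + η * (k₁ * k₂) ≠ 0 := by
      by_cases h : (k₁ * m₂ + k₂ * m₁) + (Bd / 2) * (k₁ * k₂) = 0
      · refine ⟨Bd / 3, by positivity, by linarith, ?_⟩
        intro h'
        have hkk : 0 < k₁ * k₂ := mul_pos hk₁ hk₂
        have h6 : Bd * (k₁ * k₂) = 0 := by linear_combination 6 * h - 6 * h'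
        have h7 : 0 < Bd * (k₁ * k₂) := mul_pos hBd hkk
        linarith
      · exact ⟨Bd / 2, by positivity, by linarith, h⟩
    obtain ⟨u₁c, hu₁cdef⟩ : ∃ u : EuclideanSpace ℝ (Fin n), u = u' + η • w₁ := ⟨_, rfl⟩
    obtain ⟨u₂c, hu₂cdef⟩ : ∃ u : EuclideanSpace ℝ (Fin n), u = u' + η • w₂ := ⟨_, rfl⟩
    -- inner product values
    have hA11v : A11 (u₁c, u₂c) = m₁ + η * k₁ := by
      show ⟪u₁c, d₁⟫ = m₁ + η * k₁
      rw [hu₁cdef, inner_add_left, real_inner_smul_left, ← hm₁def, ← hk₁def]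
    have hA12v : A12 (u₁c, u₂c) = m₂ := by
      show ⟪u₁c, d₂⟫ = m₂
      rw [hu₁cdef, inner_add_left, real_inner_smul_left, hw₁d₂, mul_zero, add_zero, ← hm₂def]
    have hA21v : A21 (u₁c, u₂c) = m₁ := by
      show ⟪u₂c, d₁⟫ = m₁
      rw [hu₂cdef, inner_add_left, real_inner_smul_left, hw₂d₁, mul_zero, add_zero, ← hm₁def]
    have hA22v : A22 (u₁c, u₂c) = m₂ + η * k₂ := by
      show ⟪u₂c, d₂⟫ = m₂ + η * k₂
      rw [hu₂cdef, inner_add_left, real_inner_smul_left, ← hm₂def, ← hk₂def]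
    have hdetv : det (u₁c, u₂c) = η * ((k₁ * m₂ + k₂ * m₁) + η * (k₁ * k₂)) := by
      show A11 (u₁c, u₂c) * A22 (u₁c, u₂c) - A12 (u₁c, u₂c) * A21 (u₁c, u₂c) = _
      rw [hA11v, hA12v, hA21v, hA22v]
      ring
    have hdetne : det (u₁c, u₂c) ≠ 0 := by
      rw [hdetv]
      exact mul_ne_zero (ne_of_gt hη0) hηne
    have hdd : 0 < det (u₁c, u₂c) * det (u₁c, u₂c) := by
      rcases hdetne.lt_or_gt with h | h
      · exact mul_pos_of_neg_of_neg h h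
      · exact mul_pos h h
    have hxs2 : xs = v₁ + b' • d₁ + c' • d₂ := by
      rw [hxsdef, hd₁def, hd₂def, show a' = 1 - b' - c' by linarith]
      module
    have hi1 : ⟪u₁c, xs⟫ = 0 := by
      rw [hu₁cdef, inner_add_left, real_inner_smul_left, hu'xs, hw₁xs, mul_zero, add_zero]
    have hi2 : ⟪u₂c, xs⟫ = 0 := by
      rw [hu₂cdef, inner_add_left, real_inner_smul_left, hu'xs, hw₂xs, mul_zero, add_zero]
    have hB1v : B1 (u₁c, u₂c) = -(b' * A11 (u₁c, u₂c) + c' * A12 (u₁c, u₂c)) := by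
      have h := hi1
      rw [hxs2, inner_add_right, inner_add_right, real_inner_smul_right,
        real_inner_smul_right] at h
      show ⟪u₁c, v₁⟫ = -(b' * A11 (u₁c, u₂c) + c' * A12 (u₁c, u₂c))
      have e1 : A11 (u₁c, u₂c) = ⟪u₁c, d₁⟫ := rfl
      have e2 : A12 (u₁c, u₂c) = ⟪u₁c, d₂⟫ := rfl
      rw [e1, e2]
      linarith
    have hB2v : B2 (u₁c, u₂c) = -(b' * A21 (u₁c, u₂c) + c' * A22 (u₁c, u₂c)) := by
      have h := hi2
      rw [hxs2, inner_add_right, inner_add_right, real_inner_smul_right,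
        real_inner_smul_right] at h
      show ⟪u₂c, v₁⟫ = -(b' * A21 (u₁c, u₂c) + c' * A22 (u₁c, u₂c))
      have e1 : A21 (u₁c, u₂c) = ⟪u₂c, d₁⟫ := rfl
      have e2 : A22 (u₁c, u₂c) = ⟪u₂c, d₂⟫ := rfl
      rw [e1, e2]
      linarith
    have hNsv : Ns (u₁c, u₂c) = b' * det (u₁c, u₂c) := by
      show B2 (u₁c, u₂c) * A12 (u₁c, u₂c) - B1 (u₁c, u₂c) * A22 (u₁c, u₂c)
        = b' * (A11 (u₁c, u₂c) * A22 (u₁c, u₂c) - A12 (u₁c, u₂c) * A21 (u₁c, u₂c))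
      rw [hB1v, hB2v]
      ring
    have hNtv : Nt (u₁c, u₂c) = c' * det (u₁c, u₂c) := by
      show B1 (u₁c, u₂c) * A21 (u₁c, u₂c) - B2 (u₁c, u₂c) * A11 (u₁c, u₂c)
        = c' * (A11 (u₁c, u₂c) * A22 (u₁c, u₂c) - A12 (u₁c, u₂c) * A21 (u₁c, u₂c))
      rw [hB1v, hB2v]
      ring
    have hxfv : xf (u₁c, u₂c) = xs := by
      show v₁ + (Ns (u₁c, u₂c) / det (u₁c, u₂c)) • d₁
        + (Nt (u₁c, u₂c) / det (u₁c, u₂c)) • d₂ = xs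
      rw [hNsv, hNtv, mul_div_assoc, mul_div_assoc, div_self hdetne, mul_one, mul_one, hxs2]
    refine ⟨(u₁c, u₂c), ⟨?_, ?_, ?_, ?_⟩, ?_⟩
    · rw [hNsv, mul_assoc]
      exact mul_pos hb' hdd
    · rw [hNtv, mul_assoc]
      exact mul_pos hc' hdd
    · have h : det (u₁c, u₂c) - Ns (u₁c, u₂c) - Nt (u₁c, u₂c) = a' * det (u₁c, u₂c) := by
        rw [hNsv, hNtv, show a' = 1 - b' - c' by linarith]
        ring
      rw [h, mul_assoc]
      exact mul_pos ha' hdd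
    · rw [hxfv, mem_ball, dist_eq_norm]
      linarith
    · -- distance to (u₀, u₀)
      have hbd : ∀ (u w : EuclideanSpace ℝ (Fin n)), u = u' + η • w → (η * ‖w‖ ≤ ε / 4) →
          dist u u₀ < ε := by
        intro u w hu hw
        have h1 : u - u₀ = (u' - u₀) + η • w := by rw [hu]; abel
        have h2 : dist u u₀ ≤ ‖u' - u₀‖ + ‖η • w‖ := by
          rw [dist_eq_norm, h1]
          exact norm_add_le _ _
        rw [norm_smul, Real.norm_eq_abs, abs_of_pos hη0] at h2
        linarith
      have hb1 : η * ‖w₁‖ ≤ ε / 4 := by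
        have hle : Bd ≤ ε / (4 * (‖w₁‖ + 1)) := by rw [hBddef]; exact min_le_left _ _
        have h1 : η * ‖w₁‖ ≤ Bd * (‖w₁‖ + 1) :=
          le_trans (mul_le_mul_of_nonneg_right hηB (norm_nonneg w₁))
            (mul_le_mul_of_nonneg_left (by linarith [norm_nonneg w₁]) (le_of_lt hBd))
        have h2 : Bd * (‖w₁‖ + 1) ≤ ε / (4 * (‖w₁‖ + 1)) * (‖w₁‖ + 1) :=
          mul_le_mul_of_nonneg_right hle (by positivity)
        have h3 : ε / (4 * (‖w₁‖ + 1)) * (‖w₁‖ + 1) = ε / 4 := by field_simp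
        linarith
      have hb2 : η * ‖w₂‖ ≤ ε / 4 := by
        have hle : Bd ≤ ε / (4 * (‖w₂‖ + 1)) := by rw [hBddef]; exact min_le_right _ _
        have h1 : η * ‖w₂‖ ≤ Bd * (‖w₂‖ + 1) :=
          le_trans (mul_le_mul_of_nonneg_right hηB (norm_nonneg w₂))
            (mul_le_mul_of_nonneg_left (by linarith [norm_nonneg w₂]) (le_of_lt hBd))
        have h2 : Bd * (‖w₂‖ + 1) ≤ ε / (4 * (‖w₂‖ + 1)) * (‖w₂‖ + 1) :=
          mul_le_mul_of_nonneg_right hle (by positivity)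
        have h3 : ε / (4 * (‖w₂‖ + 1)) * (‖w₂‖ + 1) = ε / 4 := by field_simp
        linarith
      rw [mem_ball, Prod.dist_eq]
      exact max_lt (hbd u₁c w₁ hu₁cdef hb1) (hbd u₂c w₂ hu₂cdef hb2)
  obtain ⟨p₀, hp₀S, hp₀b⟩ := hcenter
  refine ⟨S ∩ ball (u₀, u₀) ε, ⟨p₀, hp₀S, hp₀b⟩, hSopen.inter isOpen_ball,
    inter_subset_right, ?_⟩
  rintro p ⟨hpS, -⟩
  obtain ⟨hx, hi1, hi2⟩ := hmain p hpS
  exact ⟨xf p, hx, hi1, hi2⟩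
end
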